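/- Let v be a classical solution of the transformed regularized Delta problem satisfying v_x(x,t) + 1/b ≥ 0 on [0,b]×[0,T]. Then there is a constant C = C(a,σ,r,q,b,T,K), independent of ε and of v, such that |v(x,t)| ≤ C for all (x,t) ∈ [0,b]×[0,T]. -/

import Mathlib

open Real Set Filter
open Topology

/-- The quintic Hermite interpolant on [K−ε, K+ε]. -/
noncomputable def H5 (K ε x : ℝ) : ℝ :=
  (1 / (8 * ε ^ 3)) * (x - K + ε) ^ 3
    - (3 / (16 * ε ^ 4)) * (x - K + ε) ^ 3 * (x - K - ε)
    + (3 / (16 * ε ^ 5)) * (x - K + ε) ^ 3 * (x - K - ε) ^ 2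

/-- The regularized initial datum v₀ of the transformed problem. -/
noncomputable def v0reg (K b ε x : ℝ) : ℝ :=
  if x < K - ε then -x / b
  else if x ≤ K + ε then H5 K ε x - x / b
  else 1 - x / b

/-- a₁(x,t,p) = 0.5x²σ²(1 + e^{rt}a²x²(p + 1/b)). -/
noncomputable def coefA1 (σ a r b x t p : ℝ) : ℝ :=
  0.5 * x ^ 2 * σ ^ 2 * (1 + Real.exp (r * t) * a ^ 2 * x ^ 2 * (p + 1 / b))

/-- a₂(x,t) = 0.5σ²e^{rt}a²x⁴/b. -/
noncomputable def coefA2 (σ a r b x t : ℝ) : ℝ :=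
  0.5 * σ ^ 2 * Real.exp (r * t) * a ^ 2 * x ^ 4 / b

/-- f(x,t) = (σ² + r + 2q)x/b + 2x³σ²e^{rt}a²/b². -/
noncomputable def srcF (σ a r q b x t : ℝ) : ℝ :=
  (σ ^ 2 + r + 2 * q) * x / b + 2 * x ^ 3 * σ ^ 2 * Real.exp (r * t) * a ^ 2 / b ^ 2

/-- A classical solution of the transformed regularized Delta problem:
v, v_x, v_xx, v_t continuous on [0,b]×[0,T], the divergence-form PDE holds on
(0,b)×(0,T], homogeneous Dirichlet boundary conditions, initial datum v₀. -/
def IsClassicalSolutionV (σ a r q T K b ε : ℝ) (v : ℝ → ℝ → ℝ) : Prop :=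
  ContinuousOn (fun p : ℝ × ℝ => v p.1 p.2) (Icc 0 b ×ˢ Icc 0 T) ∧
  ContinuousOn (fun p : ℝ × ℝ => deriv (fun y => v y p.2) p.1) (Icc 0 b ×ˢ Icc 0 T) ∧
  ContinuousOn (fun p : ℝ × ℝ => deriv (deriv (fun y => v y p.2)) p.1) (Icc 0 b ×ˢ Icc 0 T) ∧
  ContinuousOn (fun p : ℝ × ℝ => deriv (fun s => v p.1 s) p.2) (Icc 0 b ×ˢ Icc 0 T) ∧
  (∀ x ∈ Ioo (0:ℝ) b, ∀ t ∈ Ioc (0:ℝ) T,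
    deriv (fun s => v x s) t =
      deriv (fun y =>
        (coefA1 σ a r b y t (deriv (fun z => v z t) y) + coefA2 σ a r b y t + ε)
          * deriv (fun z => v z t) y) x
      + (r - q) * x * deriv (fun z => v z t) x - q * v x t + srcF σ a r q b x t) ∧
  (∀ t ∈ Icc (0:ℝ) T, v 0 t = 0 ∧ v b t = 0) ∧
  (∀ x ∈ Icc (0:ℝ) b, v x 0 = v0reg K b ε x)

/-- H5 lies in [0,1] on the interpolation interval. -/
lemma H5_mem {K ε x : ℝ} (hε : 0 < ε) (h1 : K - ε ≤ x) (h2 : x ≤ K + ε) :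
    H5 K ε x ∈ Icc (0:ℝ) 1 := by
  have hw0 : 0 ≤ x - K + ε := by linarith
  have hw2 : x - K + ε ≤ 2 * ε := by linarith
  have key : H5 K ε x =
      (x - K + ε) ^ 3 * (3 * (x - K + ε) ^ 2 - 15 * ε * (x - K + ε) + 20 * ε ^ 2)
        / (16 * ε ^ 5) := by
    unfold H5
    have hne : ε ≠ 0 := ne_of_gt hε
    field_simp
    ring
  set w := x - K + ε with hw
  have hquad : 0 < 3 * w ^ 2 - 15 * ε * w + 20 * ε ^ 2 := by nlinarith [sq_nonneg (2 * w - 5 * ε)]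
  constructor
  · rw [key]
    positivity
  · rw [key, div_le_one (by positivity)]
    have hcube : (0:ℝ) ≤ (2 * ε - w) ^ 3 := pow_nonneg (by linarith) 3
    have hquad2 : (0:ℝ) ≤ 3 * w ^ 2 + 3 * ε * w + 2 * ε ^ 2 := by
      nlinarith [sq_nonneg w, mul_nonneg hε.le hw0]
    nlinarith [mul_nonneg hcube hquad2]

/-- The initial datum is bounded by 2 in absolute value. -/
lemma v0reg_bound {K b ε x : ℝ} (hb : 0 < b) (hε : 0 < ε) (hx0 : 0 ≤ x) (hxb : x ≤ b) :
    -2 ≤ v0reg K b ε x ∧ v0reg K b ε x ≤ 2 := by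
  have h1 : 0 ≤ x / b := div_nonneg hx0 hb.le
  have h2 : x / b ≤ 1 := (div_le_one hb).2 hxb
  unfold v0reg
  split_ifs with hc1 hc2
  · rw [neg_div]
    constructor <;> linarith
  · have hmem := H5_mem hε (by linarith) hc2
    obtain ⟨hH0, hH1⟩ := hmem
    constructor <;> linarith
  · constructor <;> linarith

/-- At a point of (0,T] where a function attains its max over [0,T], the
(possibly junk) derivative is nonnegative. -/
lemma deriv_nonneg_of_isMax {f : ℝ → ℝ} {t₀ T : ℝ} (h0 : 0 < t₀) (hT : t₀ ≤ T)
    (hmax : ∀ s ∈ Icc (0:ℝ) T, f s ≤ f t₀) : 0 ≤ deriv f t₀ := by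
  by_cases hd : DifferentiableAt ℝ f t₀
  · have hs := hasDerivAt_iff_tendsto_slope.1 hd.hasDerivAt
    have hle : Tendsto (slope f t₀) (𝓝[<] t₀) (𝓝 (deriv f t₀)) :=
      hs.mono_left (nhdsWithin_mono _ fun y hy => ne_of_lt hy)
    refine ge_of_tendsto hle ?_
    filter_upwards [Ioo_mem_nhdsLT_of_mem (⟨h0, le_refl t₀⟩ : t₀ ∈ Ioc 0 t₀)] with s hs'
    have hfs : f s ≤ f t₀ := hmax s ⟨hs'.1.le, hs'.2.le.trans hT⟩
    have hden : s - t₀ < 0 := by linarith [hs'.2]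
    rw [slope_def_field]
    exact div_nonneg_iff.2 (Or.inr ⟨by linarith, hden.le⟩)
  · simp [deriv_zero_of_not_differentiableAt hd]

/-- At a point of (0,T] where a function attains its min over [0,T], the
(possibly junk) derivative is nonpositive. -/
lemma deriv_nonpos_of_isMin {f : ℝ → ℝ} {t₀ T : ℝ} (h0 : 0 < t₀) (hT : t₀ ≤ T)
    (hmin : ∀ s ∈ Icc (0:ℝ) T, f t₀ ≤ f s) : deriv f t₀ ≤ 0 := by
  by_cases hd : DifferentiableAt ℝ f t₀
  · have hs := hasDerivAt_iff_tendsto_slope.1 hd.hasDerivAt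
    have hle : Tendsto (slope f t₀) (𝓝[<] t₀) (𝓝 (deriv f t₀)) :=
      hs.mono_left (nhdsWithin_mono _ fun y hy => ne_of_lt hy)
    refine le_of_tendsto hle ?_
    filter_upwards [Ioo_mem_nhdsLT_of_mem (⟨h0, le_refl t₀⟩ : t₀ ∈ Ioc 0 t₀)] with s hs'
    have hfs : f t₀ ≤ f s := hmin s ⟨hs'.1.le, hs'.2.le.trans hT⟩
    have hden : s - t₀ < 0 := by linarith [hs'.2]
    rw [slope_def_field]
    exact div_nonpos_iff.2 (Or.inl ⟨by linarith, hden.le⟩)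
  · simp [deriv_zero_of_not_differentiableAt hd]

set_option maxHeartbeats 1000000 in
/-- uniform L^∞ bound |v(x,t)| ≤ C on [0,b]×[0,T], with C
independent of ε and of v. -/
theorem stmt_8 (σ a r q T K b : ℝ)
    (hσ : 0 < σ) (ha : 0 < a) (hr : 0 < r) (hq : 0 < q) (hT : 0 < T)
    (hK : 0 < K) (hb : K < b) :
    ∃ C : ℝ, 0 < C ∧ ∀ ε : ℝ, 0 < ε → ε < 1 → ε < min K (b - K) →
      ∀ v : ℝ → ℝ → ℝ, IsClassicalSolutionV σ a r q T K b ε v →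
        (∀ x ∈ Icc (0:ℝ) b, ∀ t ∈ Icc (0:ℝ) T,
          0 ≤ deriv (fun z => v z t) x + 1 / b) →
        ∀ x ∈ Icc (0:ℝ) b, ∀ t ∈ Icc (0:ℝ) T, |v x t| ≤ C := by
  have hb0 : (0:ℝ) < b := hK.trans hb
  set F : ℝ := (σ ^ 2 + r + 2 * q) + 2 * b * σ ^ 2 * a ^ 2 * Real.exp (r * T) with hF
  have hF0 : 0 < F := by positivity
  refine ⟨2 + F / q, by positivity, ?_⟩
  intro ε hε hε1 hεm v hsol hgrad x hx t ht
  obtain ⟨hv, hvx, hvxx, hvt, hpde, hbc, hic⟩ := hsol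
  set C : ℝ := 2 + F / q with hC
  have hFq : 0 ≤ F / q := by positivity
  have hC2 : (2:ℝ) ≤ C := by rw [hC]; linarith
  have hCF : F / q ≤ C := by rw [hC]; linarith
  -- slice continuity
  have hslice : ∀ t' ∈ Icc (0:ℝ) T, ContinuousOn (fun y => v y t') (Icc 0 b) := by
    intro t' ht'
    have : ContinuousOn ((fun p : ℝ × ℝ => v p.1 p.2) ∘ (fun y => (y, t'))) (Icc 0 b) :=
      hv.comp ((continuous_id.prodMk continuous_const).continuousOn)
        (fun y hy => ⟨hy, ht'⟩)
    exact this
  -- source term bounds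
  have hsrc_ub : ∀ x' ∈ Icc (0:ℝ) b, ∀ t' ∈ Icc (0:ℝ) T, srcF σ a r q b x' t' ≤ F := by
    intro x' hx' t' ht'
    have h1 : srcF σ a r q b x' t'
        ≤ (σ ^ 2 + r + 2 * q) * b / b + 2 * b ^ 3 * σ ^ 2 * Real.exp (r * T) * a ^ 2 / b ^ 2 := by
      unfold srcF
      gcongr <;>
        first
          | exact hx'.1
          | exact hx'.2
          | exact mul_le_mul_of_nonneg_left ht'.2 hr.le
          | exact ht'.2
          | positivity
    have h2 : (σ ^ 2 + r + 2 * q) * b / b + 2 * b ^ 3 * σ ^ 2 * Real.exp (r * T) * a ^ 2 / b ^ 2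
        = F := by
      field_simp
      ring
    linarith
  have hsrc_lb : ∀ x' ∈ Icc (0:ℝ) b, ∀ t' : ℝ, 0 ≤ srcF σ a r q b x' t' := by
    intro x' hx' t'
    unfold srcF
    have h3 : (0:ℝ) ≤ x' ^ 3 := pow_nonneg hx'.1 3
    have he : (0:ℝ) < Real.exp (r * t') := Real.exp_pos _
    apply add_nonneg
    · apply div_nonneg _ hb0.le
      apply mul_nonneg _ hx'.1
      positivity
    · apply div_nonneg _ (by positivity)
      calc (0:ℝ) ≤ 2 * x' ^ 3 * σ ^ 2 * Real.exp (r * t') * a ^ 2 := by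
              apply mul_nonneg (mul_nonneg (mul_nonneg (by linarith) (sq_nonneg σ)) he.le) (sq_nonneg a)
        _ = 2 * x' ^ 3 * σ ^ 2 * Real.exp (r * t') * a ^ 2 := rfl
  -- positivity of the diffusion coefficient
  have hcoef : ∀ y ∈ Icc (0:ℝ) b, ∀ t' ∈ Icc (0:ℝ) T,
      0 < coefA1 σ a r b y t' (deriv (fun z => v z t') y) + coefA2 σ a r b y t' + ε := by
    intro y hy t' ht'
    have hg := hgrad y hy t' ht'
    have hA1 : 0 ≤ coefA1 σ a r b y t' (deriv (fun z => v z t') y) := by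
      unfold coefA1
      apply mul_nonneg (by positivity)
      have : 0 ≤ Real.exp (r * t') * a ^ 2 * y ^ 2 * (deriv (fun z => v z t') y + 1 / b) :=
        mul_nonneg (by positivity) hg
      linarith
    have hA2 : 0 ≤ coefA2 σ a r b y t' := by
      unfold coefA2
      positivity
    linarith
  -- compactness: extrema exist
  have hS : IsCompact (Icc (0:ℝ) b ×ˢ Icc (0:ℝ) T) := isCompact_Icc.prod isCompact_Icc
  have hSne : (Icc (0:ℝ) b ×ˢ Icc (0:ℝ) T).Nonempty :=
    ⟨(0, 0), ⟨⟨le_refl 0, hb0.le⟩, ⟨le_refl 0, hT.le⟩⟩⟩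
  obtain ⟨p₁, hp₁, hmax⟩ := hS.exists_isMaxOn hSne hv
  obtain ⟨p₂, hp₂, hmin⟩ := hS.exists_isMinOn hSne hv
  obtain ⟨x₁, t₁⟩ := p₁
  obtain ⟨x₂, t₂⟩ := p₂
  have hx₁ : x₁ ∈ Icc (0:ℝ) b := hp₁.1
  have ht₁ : t₁ ∈ Icc (0:ℝ) T := hp₁.2
  have hx₂ : x₂ ∈ Icc (0:ℝ) b := hp₂.1
  have ht₂ : t₂ ∈ Icc (0:ℝ) T := hp₂.2
  have hmax' : ∀ x' ∈ Icc (0:ℝ) b, ∀ t' ∈ Icc (0:ℝ) T, v x' t' ≤ v x₁ t₁ :=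
    fun x' hx' t' ht' => hmax (Set.mk_mem_prod hx' ht')
  have hmin' : ∀ x' ∈ Icc (0:ℝ) b, ∀ t' ∈ Icc (0:ℝ) T, v x₂ t₂ ≤ v x' t' :=
    fun x' hx' t' ht' => hmin (Set.mk_mem_prod hx' ht')
  -- UPPER BOUND at the max point
  have hub : v x₁ t₁ ≤ C := by
    rcases eq_or_lt_of_le ht₁.1 with ht10 | ht10
    · -- t₁ = 0
      rw [← ht10, hic x₁ hx₁]
      exact le_trans (v0reg_bound hb0 hε hx₁.1 hx₁.2).2 hC2
    rcases eq_or_lt_of_le hx₁.1 with hx10 | hx10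
    · rw [← hx10, (hbc t₁ ht₁).1]; linarith
    rcases eq_or_lt_of_le hx₁.2 with hx1b | hx1b
    · rw [hx1b, (hbc t₁ ht₁).2]; linarith
    -- interior max, t₁ > 0
    have hdx : deriv (fun z => v z t₁) x₁ = 0 := by
      have hnb : Icc (0:ℝ) b ∈ 𝓝 x₁ := Icc_mem_nhds hx10 hx1b
      have : IsLocalMax (fun z => v z t₁) x₁ := by
        filter_upwards [hnb] with z hz
        exact hmax' z hz t₁ ht₁
      exact this.deriv_eq_zero
    have hdt : 0 ≤ deriv (fun s => v x₁ s) t₁ :=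
      deriv_nonneg_of_isMax ht10 ht₁.2 (fun s hs => hmax' x₁ hx₁ s hs)
    have hEq := hpde x₁ ⟨hx10, hx1b⟩ t₁ ⟨ht10, ht₁.2⟩
    set flux : ℝ → ℝ := fun y =>
      (coefA1 σ a r b y t₁ (deriv (fun z => v z t₁) y) + coefA2 σ a r b y t₁ + ε)
        * deriv (fun z => v z t₁) y with hfluxdef
    have hflux0 : flux x₁ = 0 := by simp [hfluxdef, hdx]
    rcases le_or_gt (deriv flux x₁) 0 with hD | hD
    · -- flux derivative ≤ 0 : maximum principle bound
      have hf := hsrc_ub x₁ hx₁ t₁ ht₁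
      rw [hEq] at hdt
      rw [hdx] at hdt
      have hqM : q * v x₁ t₁ ≤ F := by
        simp only [mul_zero] at hdt
        linarith
      have : v x₁ t₁ ≤ F / q := (le_div_iff₀ hq).2 (by linarith [mul_comm q (v x₁ t₁)])
      exact this.trans hCF
    · -- flux derivative > 0 : contradiction with maximality to the left
      exfalso
      have hdiff : DifferentiableAt ℝ flux x₁ := by
        by_contra h
        rw [deriv_zero_of_not_differentiableAt h] at hD
        exact lt_irrefl 0 hD
      have hs := hasDerivAt_iff_tendsto_slope.1 hdiff.hasDerivAt
      have hsl : Tendsto (slope flux x₁) (𝓝[<] x₁) (𝓝 (deriv flux x₁)) :=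
        hs.mono_left (nhdsWithin_mono _ fun y hy => ne_of_lt hy)
      have hev : ∀ᶠ y in 𝓝[<] x₁, 0 < slope flux x₁ y :=
        hsl.eventually (eventually_gt_nhds hD)
      have hev2 : ∀ᶠ y in 𝓝[<] x₁, y ∈ Ioo 0 x₁ :=
        Ioo_mem_nhdsLT_of_mem (⟨hx10, le_refl x₁⟩ : x₁ ∈ Ioc 0 x₁)
      obtain ⟨l, hl, hsub⟩ := mem_nhdsLT_iff_exists_Ioo_subset.1 (hev.and hev2)
      set m : ℝ := max l 0 with hm
      have hmlt : m < x₁ := max_lt hl hx10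
      set ξ : ℝ := (m + x₁) / 2 with hξ
      have hξm : m < ξ := by rw [hξ]; linarith
      have hξlt : ξ < x₁ := by rw [hξ]; linarith
      have hξ0 : 0 < ξ := lt_of_le_of_lt (le_max_right l 0) hξm
      have hIoosub : Ioo ξ x₁ ⊆ Ioo l x₁ := fun y hy =>
        ⟨lt_of_le_of_lt (le_trans (le_max_left l 0) hξm.le) hy.1, hy.2⟩
      have hderiv_neg : ∀ y ∈ Ioo ξ x₁, deriv (fun z => v z t₁) y < 0 := by
        intro y hy
        obtain ⟨hsly, hy0⟩ := hsub (hIoosub hy)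
        have hyb : y ∈ Icc (0:ℝ) b := ⟨hy0.1.le, le_trans hy.2.le hx₁.2⟩
        have hfy : flux y < 0 := by
          rw [slope_def_field, hflux0, sub_zero] at hsly
          have hden : y - x₁ < 0 := by linarith [hy.2]
          by_contra h
          push_neg at h
          have := div_nonpos_of_nonneg_of_nonpos h hden.le
          linarith
        have hA := hcoef y hyb t₁ ht₁
        have hfl : flux y = (coefA1 σ a r b y t₁ (deriv (fun z => v z t₁) y)
            + coefA2 σ a r b y t₁ + ε) * deriv (fun z => v z t₁) y := rfl
        rw [hfl] at hfy
        by_contra hcon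
        push_neg at hcon
        nlinarith [mul_nonneg hA.le hcon]
      have hanti : StrictAntiOn (fun z => v z t₁) (Icc ξ x₁) := by
        apply strictAntiOn_of_deriv_neg (convex_Icc ξ x₁)
        · exact (hslice t₁ ht₁).mono (fun z hz => ⟨le_trans hξ0.le hz.1, le_trans hz.2 hx₁.2⟩)
        · intro y hy
          rw [interior_Icc] at hy
          exact hderiv_neg y hy
      have h1 : v x₁ t₁ < v ξ t₁ :=
        hanti ⟨le_refl ξ, hξlt.le⟩ ⟨hξlt.le, le_refl x₁⟩ hξlt
      have h2 : v ξ t₁ ≤ v x₁ t₁ :=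
        hmax' ξ ⟨hξ0.le, le_trans hξlt.le hx₁.2⟩ t₁ ht₁
      linarith
  -- LOWER BOUND at the min point
  have hlb : -C ≤ v x₂ t₂ := by
    rcases eq_or_lt_of_le ht₂.1 with ht20 | ht20
    · rw [← ht20, hic x₂ hx₂]
      have := (v0reg_bound (K := K) hb0 hε hx₂.1 hx₂.2).1
      linarith
    rcases eq_or_lt_of_le hx₂.1 with hx20 | hx20
    · rw [← hx20, (hbc t₂ ht₂).1]; linarith
    rcases eq_or_lt_of_le hx₂.2 with hx2b | hx2b
    · rw [hx2b, (hbc t₂ ht₂).2]; linarith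
    have hdx : deriv (fun z => v z t₂) x₂ = 0 := by
      have hnb : Icc (0:ℝ) b ∈ 𝓝 x₂ := Icc_mem_nhds hx20 hx2b
      have : IsLocalMin (fun z => v z t₂) x₂ := by
        filter_upwards [hnb] with z hz
        exact hmin' z hz t₂ ht₂
      exact this.deriv_eq_zero
    have hdt : deriv (fun s => v x₂ s) t₂ ≤ 0 :=
      deriv_nonpos_of_isMin ht20 ht₂.2 (fun s hs => hmin' x₂ hx₂ s hs)
    have hEq := hpde x₂ ⟨hx20, hx2b⟩ t₂ ⟨ht20, ht₂.2⟩
    set flux : ℝ → ℝ := fun y =>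
      (coefA1 σ a r b y t₂ (deriv (fun z => v z t₂) y) + coefA2 σ a r b y t₂ + ε)
        * deriv (fun z => v z t₂) y with hfluxdef
    have hflux0 : flux x₂ = 0 := by simp [hfluxdef, hdx]
    rcases le_or_gt 0 (deriv flux x₂) with hD | hD
    · have hf := hsrc_lb x₂ hx₂ t₂
      rw [hEq] at hdt
      rw [hdx] at hdt
      simp only [mul_zero] at hdt
      have hqm : 0 ≤ q * v x₂ t₂ := by linarith
      have h0m := div_nonneg hqm hq.le
      rw [mul_div_cancel_left₀ _ (ne_of_gt hq)] at h0m
      linarith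
    · exfalso
      have hdiff : DifferentiableAt ℝ flux x₂ := by
        by_contra h
        rw [deriv_zero_of_not_differentiableAt h] at hD
        exact lt_irrefl 0 hD
      have hs := hasDerivAt_iff_tendsto_slope.1 hdiff.hasDerivAt
      have hsl : Tendsto (slope flux x₂) (𝓝[<] x₂) (𝓝 (deriv flux x₂)) :=
        hs.mono_left (nhdsWithin_mono _ fun y hy => ne_of_lt hy)
      have hev : ∀ᶠ y in 𝓝[<] x₂, slope flux x₂ y < 0 :=
        hsl.eventually (eventually_lt_nhds hD)
      have hev2 : ∀ᶠ y in 𝓝[<] x₂, y ∈ Ioo 0 x₂ :=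
        Ioo_mem_nhdsLT_of_mem (⟨hx20, le_refl x₂⟩ : x₂ ∈ Ioc 0 x₂)
      obtain ⟨l, hl, hsub⟩ := mem_nhdsLT_iff_exists_Ioo_subset.1 (hev.and hev2)
      set m : ℝ := max l 0 with hm
      have hmlt : m < x₂ := max_lt hl hx20
      set ξ : ℝ := (m + x₂) / 2 with hξ
      have hξm : m < ξ := by rw [hξ]; linarith
      have hξlt : ξ < x₂ := by rw [hξ]; linarith
      have hξ0 : 0 < ξ := lt_of_le_of_lt (le_max_right l 0) hξm
      have hIoosub : Ioo ξ x₂ ⊆ Ioo l x₂ := fun y hy =>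
        ⟨lt_of_le_of_lt (le_trans (le_max_left l 0) hξm.le) hy.1, hy.2⟩
      have hderiv_pos : ∀ y ∈ Ioo ξ x₂, 0 < deriv (fun z => v z t₂) y := by
        intro y hy
        obtain ⟨hsly, hy0⟩ := hsub (hIoosub hy)
        have hyb : y ∈ Icc (0:ℝ) b := ⟨hy0.1.le, le_trans hy.2.le hx₂.2⟩
        have hfy : 0 < flux y := by
          rw [slope_def_field, hflux0, sub_zero] at hsly
          have hden : y - x₂ < 0 := by linarith [hy.2]
          by_contra h
          push_neg at h
          have := div_nonneg_iff.2 (Or.inr ⟨h, hden.le⟩)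
          linarith
        have hA := hcoef y hyb t₂ ht₂
        have hfl : flux y = (coefA1 σ a r b y t₂ (deriv (fun z => v z t₂) y)
            + coefA2 σ a r b y t₂ + ε) * deriv (fun z => v z t₂) y := rfl
        rw [hfl] at hfy
        by_contra hcon
        push_neg at hcon
        nlinarith [mul_nonneg hA.le (neg_nonneg.2 hcon)]
      have hmono : StrictMonoOn (fun z => v z t₂) (Icc ξ x₂) := by
        apply strictMonoOn_of_deriv_pos (convex_Icc ξ x₂)
        · exact (hslice t₂ ht₂).mono (fun z hz => ⟨le_trans hξ0.le hz.1, le_trans hz.2 hx₂.2⟩)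
        · intro y hy
          rw [interior_Icc] at hy
          exact hderiv_pos y hy
      have h1 : v ξ t₂ < v x₂ t₂ :=
        hmono ⟨le_refl ξ, hξlt.le⟩ ⟨hξlt.le, le_refl x₂⟩ hξlt
      have h2 : v x₂ t₂ ≤ v ξ t₂ :=
        hmin' ξ ⟨hξ0.le, le_trans hξlt.le hx₂.2⟩ t₂ ht₂
      linarith
  have h1 : v x t ≤ v x₁ t₁ := hmax' x hx t ht
  have h2 : v x₂ t₂ ≤ v x t := hmin' x hx t ht
  rw [abs_le]
  exact ⟨by linarith, by linarith⟩
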